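/- Let G be a connected graph and G' the multigraph obtained by replacing each edge e by r parallel copies e_1,...,e_r with weights w(e_i) = i - 1. Then for any integer k, G has r spanning trees T_1,...,T_r with Σ_{1≤i<j≤r} |E(T_i) ∩ E(T_j)| ≤ k if and only if G' has r pairwise edge-disjoint spanning trees of total weight at most k. -/

import Mathlib

/-- `T` is the edge set of a spanning tree of the simple graph `G`. -/
def IsSpanningTreeEdgeSet {V : Type*} [Fintype V] [DecidableEq V]
    (G : SimpleGraph V) (T : Finset (Sym2 V)) : Prop :=
  ↑T ⊆ G.edgeSet ∧ (SimpleGraph.fromEdgeSet (↑T : Set (Sym2 V))).Connected ∧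
    (SimpleGraph.fromEdgeSet (↑T : Set (Sym2 V))).IsAcyclic

/-- A spanning tree of the multigraph obtained from `G` by replacing each edge
with `r` parallel copies. -/
def IsSpanningTreeOfCopies {V : Type*} [Fintype V] [DecidableEq V]
    (G : SimpleGraph V) (r : ℕ) (S : Finset (Sym2 V × Fin r)) : Prop :=
  (∀ e j j', (e, j) ∈ S → (e, j') ∈ S → j = j') ∧
    IsSpanningTreeEdgeSet G (S.image Prod.fst)

lemma sum_range_le_sum_nat (s : Finset ℕ) :
    ∑ i ∈ Finset.range s.card, i ≤ ∑ x ∈ s, x := by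
  induction s using Finset.strongInduction with
  | _ s ih =>
    rcases s.eq_empty_or_nonempty with rfl | hs
    · simp
    · set m := s.max' hs with hm
      have hmem : m ∈ s := s.max'_mem hs
      have hcard : s.card ≤ m + 1 := by
        have hsub : s ⊆ Finset.range (m + 1) := by
          intro x hx
          simp only [Finset.mem_range]
          exact Nat.lt_succ_of_le (s.le_max' x hx)
        simpa using Finset.card_le_card hsub
      have hpos : 1 ≤ s.card := Finset.card_pos.mpr hs
      have hec : (s.erase m).card = s.card - 1 := Finset.card_erase_of_mem hmem
      have hih := ih (s.erase m) (Finset.erase_ssubset hmem)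
      have hsum : m + ∑ x ∈ s.erase m, x = ∑ x ∈ s, x :=
        Finset.add_sum_erase s id hmem
      have h1 : ∑ i ∈ Finset.range s.card, i
          = (s.card - 1) + ∑ i ∈ Finset.range (s.card - 1), i := by
        conv_lhs => rw [show s.card = (s.card - 1) + 1 by omega]
        rw [Finset.sum_range_succ]; ring
      rw [h1, ← hsum, ← hec]
      exact Nat.add_le_add (by omega) hih

lemma sum_fin_ge {r : ℕ} (s : Finset (Fin r)) :
    s.card * (s.card - 1) ≤ 2 * ∑ c ∈ s, (c : ℕ) := by
  have hinj : Function.Injective (Fin.val : Fin r → ℕ) := Fin.val_injective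
  have h1 : ∑ x ∈ s.image Fin.val, x = ∑ c ∈ s, (c : ℕ) :=
    Finset.sum_image (f := fun x => x) (fun x _ y _ h => hinj h)
  have h2 : (s.image Fin.val).card = s.card := Finset.card_image_of_injective _ hinj
  have h3 := sum_range_le_sum_nat (s.image Fin.val)
  have h4 := Finset.sum_range_id_mul_two (s.image Fin.val).card
  rw [h2] at h3 h4
  omega

lemma card_pairs {α : Type*} [DecidableEq α] [LinearOrder α] (s : Finset α) :
    ((s ×ˢ s).filter fun p => p.1 < p.2).card * 2 = s.card * (s.card - 1) := by
  have hoff : ((s ×ˢ s).filter fun p => p.1 < p.2) ∪ ((s ×ˢ s).filter fun p => p.2 < p.1)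
      = s.offDiag := by
    ext p
    simp only [Finset.mem_union, Finset.mem_filter, Finset.mem_product, Finset.mem_offDiag]
    constructor
    · rintro (⟨⟨h1, h2⟩, h⟩ | ⟨⟨h1, h2⟩, h⟩)
      · exact ⟨h1, h2, ne_of_lt h⟩
      · exact ⟨h1, h2, (ne_of_lt h).symm⟩
    · rintro ⟨h1, h2, h3⟩
      rcases lt_or_gt_of_ne h3 with h | h
      · exact Or.inl ⟨⟨h1, h2⟩, h⟩
      · exact Or.inr ⟨⟨h1, h2⟩, h⟩
  have hdisj : Disjoint ((s ×ˢ s).filter fun p => p.1 < p.2)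
      ((s ×ˢ s).filter fun p => p.2 < p.1) := by
    rw [Finset.disjoint_left]
    intro p hp hq
    simp only [Finset.mem_filter] at hp hq
    exact absurd hq.2 (not_lt_of_gt hp.2)
  have hswap : ((s ×ˢ s).filter fun p => p.2 < p.1).card
      = ((s ×ˢ s).filter fun p => p.1 < p.2).card := by
    apply Finset.card_bij (fun p _ => Prod.swap p)
    · intro p hp
      simp only [Finset.mem_filter, Finset.mem_product] at hp ⊢
      exact ⟨⟨hp.1.2, hp.1.1⟩, hp.2⟩
    · intro p _ q _ h
      exact Prod.swap_injective h
    · intro p hp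
      simp only [Finset.mem_filter, Finset.mem_product] at hp
      refine ⟨Prod.swap p, ?_, by simp⟩
      simp only [Finset.mem_filter, Finset.mem_product, Prod.fst_swap, Prod.snd_swap,
        exists_prop]
      exact ⟨⟨hp.1.2, hp.1.1⟩, hp.2⟩
  have hcard := Finset.card_union_of_disjoint hdisj
  rw [hoff] at hcard
  have hod : s.offDiag.card = s.card * s.card - s.card := Finset.offDiag_card s
  have : s.card * s.card - s.card = s.card * (s.card - 1) := by
    cases Nat.eq_zero_or_pos s.card with
    | inl h => simp [h]
    | inr h => rw [Nat.mul_sub_one]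
  omega

lemma key_ineq {r : ℕ} (A C : Finset (Fin r)) (h : A.card ≤ C.card) :
    ((A ×ˢ A).filter fun p => p.1 < p.2).card ≤ ∑ c ∈ C, (c : ℕ) := by
  have h1 := card_pairs A
  have h2 := sum_fin_ge C
  have h3 : A.card * (A.card - 1) ≤ C.card * (C.card - 1) :=
    Nat.mul_le_mul h (Nat.sub_le_sub_right h 1)
  omega

/-- `G` has `r` spanning trees with `∑_{i<j} |E(T_i) ∩ E(T_j)| ≤ k`
iff the multigraph `G'` (each edge replaced by `r` parallel copies `e_1,…,e_r`
with weight `w(e_i) = i - 1`, modeled by copies `(e, j)` of weight `j`) has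
`r` pairwise edge-disjoint spanning trees of total weight at most `k`. -/
theorem stmt8 {V : Type*} [Fintype V] [DecidableEq V] (G : SimpleGraph V)
    (hG : G.Connected) (r k : ℕ) :
    (∃ T : Fin r → Finset (Sym2 V),
        (∀ i, IsSpanningTreeEdgeSet G (T i)) ∧
        (∑ p ∈ Finset.univ.filter (fun p : Fin r × Fin r => p.1 < p.2),
            (T p.1 ∩ T p.2).card) ≤ k) ↔
    (∃ S : Fin r → Finset (Sym2 V × Fin r),
        (∀ i, IsSpanningTreeOfCopies G r (S i)) ∧
        (∀ i j, i ≠ j → Disjoint (S i) (S j)) ∧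
        (∑ i : Fin r, ∑ x ∈ S i, (x.2 : ℕ)) ≤ k) := by
  constructor
  · rintro ⟨T, hT, hsum⟩
    -- rank of tree i among trees containing e
    set rk : Sym2 V → Fin r → ℕ :=
      fun e i => (Finset.univ.filter fun j : Fin r => j < i ∧ e ∈ T j).card with hrk
    have hrk_lt : ∀ e (i : Fin r), rk e i < r := by
      intro e i
      have hsub : (Finset.univ.filter fun j : Fin r => j < i ∧ e ∈ T j)
          ⊆ Finset.univ.erase i := by
        intro j hj
        simp only [Finset.mem_filter] at hj
        exact Finset.mem_erase.mpr ⟨ne_of_lt hj.2.1, Finset.mem_univ j⟩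
      have h1 : rk e i ≤ r - 1 := by
        have := Finset.card_le_card hsub
        rwa [Finset.card_erase_of_mem (Finset.mem_univ i), Finset.card_univ,
          Fintype.card_fin] at this
      have hr : 0 < r := i.pos
      omega
    have hmem : ∀ (i : Fin r) (x : Sym2 V × Fin r),
        x ∈ (T i).image (fun e => (e, (⟨rk e i, hrk_lt e i⟩ : Fin r))) ↔
        x.1 ∈ T i ∧ x.2 = ⟨rk x.1 i, hrk_lt x.1 i⟩ := by
      intro i x
      simp only [Finset.mem_image]
      constructor
      · rintro ⟨e, he, rfl⟩
        exact ⟨he, rfl⟩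
      · rintro ⟨h1, h2⟩
        exact ⟨x.1, h1, by rw [← h2]⟩
    have hfst : ∀ i : Fin r,
        ((T i).image (fun e => (e, (⟨rk e i, hrk_lt e i⟩ : Fin r)))).image Prod.fst = T i := by
      intro i
      rw [Finset.image_image]
      exact Finset.image_id
    have hmono : ∀ (e : Sym2 V) (i j : Fin r), i < j → e ∈ T i → rk e i < rk e j := by
      intro e i j hij hei
      apply Finset.card_lt_card
      constructor
      · intro a ha
        simp only [Finset.mem_filter] at ha ⊢
        exact ⟨ha.1, lt_trans ha.2.1 hij, ha.2.2⟩
      · intro hcon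
        have hi : i ∈ Finset.univ.filter fun a : Fin r => a < j ∧ e ∈ T a := by
          simp only [Finset.mem_filter]
          exact ⟨Finset.mem_univ i, hij, hei⟩
        have := hcon hi
        simp only [Finset.mem_filter] at this
        exact absurd this.2.1 (lt_irrefl i)
    refine ⟨fun i => (T i).image fun e => (e, (⟨rk e i, hrk_lt e i⟩ : Fin r)), ?_, ?_, ?_⟩
    · intro i
      constructor
      · intro e j j' hj hj'
        rw [hmem i (e, j)] at hj
        rw [hmem i (e, j')] at hj'
        exact hj.2.trans hj'.2.symm
      · rw [hfst i]
        exact hT i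
    · intro i j hij
      rw [Finset.disjoint_left]
      intro x hx hx'
      rw [hmem i x] at hx
      rw [hmem j x] at hx'
      have heq : rk x.1 i = rk x.1 j := by
        simpa using congrArg Fin.val (hx.2.symm.trans hx'.2)
      rcases lt_or_gt_of_ne hij with h | h
      · exact absurd heq (ne_of_lt (hmono x.1 i j h hx.1))
      · exact absurd heq.symm (ne_of_lt (hmono x.1 j i h hx'.1))
    · -- weight sum equals the pair sum
      have hwt : ∀ i : Fin r,
          ∑ x ∈ (T i).image (fun e => (e, (⟨rk e i, hrk_lt e i⟩ : Fin r))), (x.2 : ℕ)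
          = ∑ e ∈ T i, rk e i := by
        intro i
        rw [Finset.sum_image]
        intro x _ y _ h
        exact congrArg Prod.fst h
      rw [Finset.sum_congr rfl fun i _ => hwt i]
      -- main identity
      have hid : ∑ i : Fin r, ∑ e ∈ T i, rk e i
          = ∑ p ∈ Finset.univ.filter (fun p : Fin r × Fin r => p.1 < p.2),
              (T p.1 ∩ T p.2).card := by
        have step1 : ∀ (i : Fin r), ∑ e ∈ T i, rk e i
            = ∑ j : Fin r, if j < i then (T i ∩ T j).card else 0 := by
          intro i
          have : ∀ e ∈ T i, rk e i = ∑ j : Fin r, if j < i ∧ e ∈ T j then 1 else 0 := by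
            intro e _
            rw [hrk]
            exact Finset.card_filter _ _
          rw [Finset.sum_congr rfl this, Finset.sum_comm]
          refine Finset.sum_congr rfl fun j _ => ?_
          by_cases hj : j < i
          · simp only [hj, true_and, if_true]
            rw [← Finset.card_filter, Finset.filter_mem_eq_inter]
          · simp [hj]
        rw [Finset.sum_congr rfl fun i _ => step1 i]
        rw [Finset.sum_filter]
        rw [← Finset.univ_product_univ, Finset.sum_product]
        rw [Finset.sum_comm]
        refine Finset.sum_congr rfl fun j _ => Finset.sum_congr rfl fun i _ => ?_
        by_cases h : j < i
        · simp [h, Finset.inter_comm]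
        · simp [h]
      rw [hid]
      exact hsum
  · rintro ⟨S, hS, hdisj, hsum⟩
    refine ⟨fun i => (S i).image Prod.fst, fun i => (hS i).2, ?_⟩
    set T : Fin r → Finset (Sym2 V) := fun i => (S i).image Prod.fst with hTdef
    set U : Finset (Sym2 V × Fin r) := Finset.univ.biUnion S with hUdef
    set A : Sym2 V → Finset (Fin r) :=
      fun e => Finset.univ.filter (fun i => e ∈ T i) with hAdef
    set C : Sym2 V → Finset (Fin r) :=
      fun e => (U.filter (fun x => x.1 = e)).image Prod.snd with hCdef
    -- rewrite RHS (the weight) as a sum over edges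
    have h1 : ∑ i : Fin r, ∑ x ∈ S i, (x.2 : ℕ) = ∑ x ∈ U, (x.2 : ℕ) := by
      rw [hUdef]
      exact (Finset.sum_biUnion (fun i _ j _ hij => hdisj i j hij)).symm
    have h2 : ∑ x ∈ U, (x.2 : ℕ)
        = ∑ e : Sym2 V, ∑ x ∈ U.filter (fun x => x.1 = e), (x.2 : ℕ) :=
      (Finset.sum_fiberwise U Prod.fst (fun x => (x.2 : ℕ))).symm
    have h3 : ∀ e : Sym2 V,
        ∑ x ∈ U.filter (fun x => x.1 = e), (x.2 : ℕ) = ∑ c ∈ C e, (c : ℕ) := by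
      intro e
      rw [hCdef]
      refine (Finset.sum_image ?_).symm
      intro x hx y hy hxy
      simp only [Finset.mem_coe, Finset.mem_filter] at hx hy
      exact Prod.ext (hx.2.trans hy.2.symm) hxy
    -- rewrite LHS (intersection count) as a sum over edges
    have h4 : ∑ p ∈ Finset.univ.filter (fun p : Fin r × Fin r => p.1 < p.2),
          (T p.1 ∩ T p.2).card
        = ∑ e : Sym2 V, ((A e ×ˢ A e).filter fun p => p.1 < p.2).card := by
      have hcard : ∀ a b : Fin r, (T a ∩ T b).card
          = ∑ e : Sym2 V, if e ∈ T a ∧ e ∈ T b then 1 else 0 := by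
        intro a b
        rw [show T a ∩ T b = Finset.univ.filter (fun e => e ∈ T a ∧ e ∈ T b) by
          ext e; simp]
        exact Finset.card_filter _ _
      rw [Finset.sum_congr rfl fun p _ => hcard p.1 p.2, Finset.sum_comm]
      refine Finset.sum_congr rfl fun e _ => ?_
      rw [← Finset.card_filter]
      congr 1
      ext p
      rw [Finset.mem_filter, Finset.mem_filter, Finset.mem_filter, Finset.mem_product,
        hAdef]
      simp only [Finset.mem_filter, Finset.mem_univ, true_and]
      tauto
    -- cardinality comparison per edge
    have h5 : ∀ e : Sym2 V, (A e).card ≤ (C e).card := by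
      intro e
      classical
      have hex : ∀ i ∈ A e, ∃ c : Fin r, (e, c) ∈ S i := by
        intro i hi
        rw [hAdef] at hi
        simp only [Finset.mem_filter, hTdef, Finset.mem_image] at hi
        obtain ⟨x, hx, hx1⟩ := hi.2
        exact ⟨x.2, by rwa [show (e, x.2) = x from (Prod.ext hx1.symm rfl)]⟩
      choose f hf using hex
      apply Finset.card_le_card_of_injOn (fun i => if h : i ∈ A e then f i h else i)
      · intro i hi
        simp only [Finset.mem_coe] at hi ⊢
        rw [dif_pos hi]
        rw [hCdef]
        simp only [Finset.mem_image, Finset.mem_filter]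
        exact ⟨(e, f i hi), ⟨Finset.mem_biUnion.mpr ⟨i, Finset.mem_univ i, hf i hi⟩, rfl⟩, rfl⟩
      · intro i hi j hj hij
        simp only [Finset.mem_coe] at hi hj
        simp only [dif_pos hi, dif_pos hj] at hij
        by_contra hne
        have := Finset.disjoint_left.mp (hdisj i j hne) (hf i hi)
        rw [hij] at this
        exact this (hf j hj)
    calc ∑ p ∈ Finset.univ.filter (fun p : Fin r × Fin r => p.1 < p.2),
          (T p.1 ∩ T p.2).card
        = ∑ e : Sym2 V, ((A e ×ˢ A e).filter fun p => p.1 < p.2).card := h4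
      _ ≤ ∑ e : Sym2 V, ∑ c ∈ C e, (c : ℕ) :=
          Finset.sum_le_sum fun e _ => key_ineq (A e) (C e) (h5 e)
      _ = ∑ i : Fin r, ∑ x ∈ S i, (x.2 : ℕ) := by
          rw [h1, h2]
          exact (Finset.sum_congr rfl fun e _ => h3 e).symm
      _ ≤ k := hsum
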